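/- In the Grandparent graph GP with height function h(k,f) = k and any fixed vertex o: the only bridge of span 0 starting at o is the length-0 walk; there are exactly 2 bridges of span 1 starting at o, both of length 1; and the number of bridges of span 2 and length n starting at o equals 4 for each n ∈ {1, 2, 3} and 0 for every other n. Equivalently, ℬ_0(x) = 1, ℬ_1(x) = 2x and ℬ_2(x) = 4x + 4x² + 4x³, where ℬ_a(x) = Σ_{n≥0} b_n(a)·x^n and b_n(a) is the number of bridges of length n and span a starting at o. -/

import Mathlib

open Filter Finset

noncomputable section

variable {V : Type*}

/-- `w : ℕ → V` represents a walk of length `n` from `v`: consecutive vertices are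
adjacent and the values are pinned to `w n` from index `n` on. -/
noncomputable def IsWalkFrom (G : SimpleGraph V) (n : ℕ) (v : V) (w : ℕ → V) : Prop :=
  w 0 = v ∧ (∀ i < n, G.Adj (w i) (w (i + 1))) ∧ (∀ i, n ≤ i → w i = w n)

/-- A self-avoiding walk of length `n` starting at `v`. -/
noncomputable def IsSAWFrom (G : SimpleGraph V) (n : ℕ) (v : V) (w : ℕ → V) : Prop :=
  IsWalkFrom G n v w ∧ Set.InjOn w (Set.Iic n)

/-- A bridge with respect to the height function `h`. -/
noncomputable def IsBridgeFrom (G : SimpleGraph V) (h : V → ℤ) (n : ℕ) (v : V) (w : ℕ → V) : Prop :=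
  IsSAWFrom G n v w ∧ ∀ i, 1 ≤ i → i ≤ n → h (w 0) < h (w i) ∧ h (w i) ≤ h (w n)

/-- A reversed bridge with respect to the height function `h`. -/
noncomputable def IsRBridgeFrom (G : SimpleGraph V) (h : V → ℤ) (n : ℕ) (v : V) (w : ℕ → V) : Prop :=
  IsSAWFrom G n v w ∧ ∀ i, 1 ≤ i → i ≤ n → h (w 0) > h (w i) ∧ h (w i) ≥ h (w n)

/-- A half-space walk with respect to the height function `h`. -/
noncomputable def IsHSWFrom (G : SimpleGraph V) (h : V → ℤ) (n : ℕ) (v : V) (w : ℕ → V) : Prop :=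
  IsSAWFrom G n v w ∧ ∀ i, 1 ≤ i → i ≤ n → h (w 0) < h (w i)

/-- The span of (the first `n+1` vertices of) a walk. -/
noncomputable def walkSpan (h : V → ℤ) (n : ℕ) (w : ℕ → V) : ℤ :=
  ((Finset.range (n + 1)).sup' ⟨0, by simp⟩ fun i => h (w i)) -
    ((Finset.range (n + 1)).inf' ⟨0, by simp⟩ fun i => h (w i))

/-- Number of SAWs of length `n` starting at `v`. -/
noncomputable def sawCount (G : SimpleGraph V) (n : ℕ) (v : V) : ℕ :=
  Nat.card {w : ℕ → V // IsSAWFrom G n v w}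

/-- Number of bridges of length `n` starting at `v`. -/
noncomputable def bridgeCount (G : SimpleGraph V) (h : V → ℤ) (n : ℕ) (v : V) : ℕ :=
  Nat.card {w : ℕ → V // IsBridgeFrom G h n v w}

/-- Number of reversed bridges of length `n` starting at `v`. -/
noncomputable def rbridgeCount (G : SimpleGraph V) (h : V → ℤ) (n : ℕ) (v : V) : ℕ :=
  Nat.card {w : ℕ → V // IsRBridgeFrom G h n v w}

/-- Number of half-space walks of length `n` starting at `v`. -/
noncomputable def hswCount (G : SimpleGraph V) (h : V → ℤ) (n : ℕ) (v : V) : ℕ :=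
  Nat.card {w : ℕ → V // IsHSWFrom G h n v w}

/-- Number of bridges of length `n` and span `a` starting at `v`. -/
noncomputable def bridgeSpanCount (G : SimpleGraph V) (h : V → ℤ) (n : ℕ) (v : V) (a : ℤ) : ℕ :=
  Nat.card {w : ℕ → V // IsBridgeFrom G h n v w ∧ walkSpan h n w = a}

/-- Number of reversed bridges of length `n` and span `a` starting at `v`. -/
noncomputable def rbridgeSpanCount (G : SimpleGraph V) (h : V → ℤ) (n : ℕ) (v : V) (a : ℤ) : ℕ :=
  Nat.card {w : ℕ → V // IsRBridgeFrom G h n v w ∧ walkSpan h n w = a}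

/-- `c_n`: maximal number of SAWs of length `n` over all starting vertices. -/
noncomputable def sawSup (G : SimpleGraph V) (n : ℕ) : ℕ :=
  sSup {m | ∃ v : V, m = sawCount G n v}

/-- `b_n`: minimal number of bridges of length `n` over all starting vertices. -/
noncomputable def bridgeInf (G : SimpleGraph V) (h : V → ℤ) (n : ℕ) : ℕ :=
  sInf {m | ∃ v : V, m = bridgeCount G h n v}

/-- `b̄_n`: minimal number of reversed bridges of length `n` over all starting vertices. -/
noncomputable def rbridgeInf (G : SimpleGraph V) (h : V → ℤ) (n : ℕ) : ℕ :=
  sInf {m | ∃ v : V, m = rbridgeCount G h n v}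

/-- `idx` together with the spans `a` form the canonical decomposition of the walk `w`
of length `n` into an alternating sequence of `k` bridges and reversed bridges. -/
noncomputable def IsCanonicalDecomp (h : V → ℤ) (n : ℕ) (w : ℕ → V) (k : ℕ) (a : ℕ → ℤ)
    (idx : ℕ → ℕ) : Prop :=
  idx 0 = 0 ∧ idx k = n ∧
  ∀ j, 1 ≤ j → j ≤ k →
    idx (j - 1) < idx j ∧ idx j ≤ n ∧
    a j = |h (w (idx j)) - h (w (idx (j - 1)))| ∧
    (∀ i, idx (j - 1) ≤ i → i ≤ n → |h (w i) - h (w (idx (j - 1)))| ≤ a j) ∧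
    (∀ i, idx j < i → i ≤ n → |h (w i) - h (w (idx (j - 1)))| < a j)

/-- `h_{n,v}(a_1,…,a_k)`: number of half-space walks of length `n` from `v` whose
canonical decomposition has span sequence `a 1, …, a k`. -/
noncomputable def hswSeqCount (G : SimpleGraph V) (h : V → ℤ) (n : ℕ) (v : V) (k : ℕ)
    (a : ℕ → ℤ) : ℕ :=
  Nat.card {w : ℕ → V // IsHSWFrom G h n v w ∧ ∃ idx : ℕ → ℕ,
    IsCanonicalDecomp h n w k a idx}

/-- The group `Γ` acts quasi-transitively. -/
noncomputable def QuasiTransitiveSub (G : SimpleGraph V) (Γ : Subgroup (G ≃g G)) : Prop :=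
  ∃ S : Finset V, ∀ v : V, ∃ γ ∈ Γ, ∃ s ∈ S, γ s = v

/-- The graph `G` is quasi-transitive. -/
noncomputable def QuasiTransitive (G : SimpleGraph V) : Prop :=
  ∃ S : Finset V, ∀ v : V, ∃ γ : G ≃g G, ∃ s ∈ S, γ s = v

/-- `(h, Γ)` is a graph height function on `G`. -/
noncomputable def IsGraphHeightFunction (G : SimpleGraph V) (h : V → ℤ) (Γ : Subgroup (G ≃g G)) : Prop :=
  QuasiTransitiveSub G Γ ∧
  (∀ γ ∈ Γ, ∀ u v : V, h (γ v) - h (γ u) = h v - h u) ∧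
  (∀ v : V, ∃ u w : V, G.Adj v u ∧ G.Adj v w ∧ h u < h v ∧ h v < h w)

/-- `P_D A`: number of partitions of `A` into distinct parts. -/
noncomputable def distinctPartitionCount (A : ℕ) : ℕ := (Nat.Partition.distincts A).card

noncomputable def bridgeBeta (G : SimpleGraph V) (h : V → ℤ) : ℝ :=
  Filter.limsup (fun n : ℕ => (bridgeInf G h n : ℝ) ^ (1 / (n : ℝ))) atTop

noncomputable def rbridgeBeta (G : SimpleGraph V) (h : V → ℤ) : ℝ :=
  Filter.limsup (fun n : ℕ => (rbridgeInf G h n : ℝ) ^ (1 / (n : ℝ))) atTop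

noncomputable def betaMax (G : SimpleGraph V) (h : V → ℤ) : ℝ :=
  max (bridgeBeta G h) (rbridgeBeta G h)
/-- Vertices of the Grandparent graph: pairs `(k, f)` where `f i = false` for `i ≥ k`
and for all sufficiently small `i`. -/
def GPVertex : Type :=
  {p : ℤ × (ℤ → Bool) // (∀ i, p.1 ≤ i → p.2 i = false) ∧ ∃ N : ℤ, ∀ i ≤ N, p.2 i = false}

/-- The predecessor map of the Grandparent graph. -/
def GPpred (v : GPVertex) : GPVertex :=
  ⟨(v.val.1 - 1, fun i => if i = v.val.1 - 1 then false else v.val.2 i), by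
    constructor
    · intro i hi
      dsimp only at hi ⊢
      split
      · rfl
      · exact v.prop.1 i (by omega)
    · obtain ⟨N, hN⟩ := v.prop.2
      refine ⟨N, fun i hi => ?_⟩
      dsimp only
      split
      · rfl
      · exact hN i hi⟩

/-- The Grandparent graph. -/
def GP : SimpleGraph GPVertex where
  Adj u v := u ≠ v ∧
    (u = GPpred v ∨ v = GPpred u ∨ u = GPpred (GPpred v) ∨ v = GPpred (GPpred u))
  symm := by
    constructor
    intro u v hv
    exact ⟨Ne.symm hv.1, by tauto⟩
  loopless := by
    constructor
    intro u hu
    exact hu.1 rfl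

/-- The height of a vertex of the Grandparent graph. -/
def GPheight (v : GPVertex) : ℤ := v.val.1

-- Basic structural lemmas about GP
namespace GPaux

lemma vext {u v : GPVertex} (h1 : u.val.1 = v.val.1) (h2 : ∀ i, u.val.2 i = v.val.2 i) :
    u = v := Subtype.ext (Prod.ext h1 (funext h2))

@[simp] lemma height_pred (v : GPVertex) : GPheight (GPpred v) = GPheight v - 1 := rfl

/-- the child of `v` with bit `b`. -/
def child (v : GPVertex) (b : Bool) : GPVertex :=
  ⟨(v.val.1 + 1, fun i => if i = v.val.1 then b else v.val.2 i), by
    constructor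
    · intro i hi
      dsimp only
      split
      · omega
      · exact v.prop.1 i (by omega)
    · obtain ⟨N, hN⟩ := v.prop.2
      refine ⟨min N (v.val.1 - 1), fun i hi => ?_⟩
      dsimp only
      rw [if_neg (by omega)]
      exact hN i (by omega)⟩

@[simp] lemma height_child (v : GPVertex) (b : Bool) :
    GPheight (child v b) = GPheight v + 1 := rfl

@[simp] lemma child_bit (v : GPVertex) (b : Bool) :
    (child v b).val.2 v.val.1 = b := by simp [child]

@[simp] lemma pred_child (v : GPVertex) (b : Bool) : GPpred (child v b) = v := by
  apply vext
  · simp [GPpred, child]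
  · intro i
    simp only [GPpred, child]
    by_cases hi : i = v.val.1
    · rw [if_pos (by omega)]
      simp only [show i = v.val.1 + 1 - 1 ↔ True from iff_true_intro (by omega), if_true]
      exact (v.prop.1 i (le_of_eq hi.symm)).symm
    · rw [if_neg (by omega)]
      simp only [show i = v.val.1 + 1 - 1 ↔ False from iff_false_intro (by omega), if_false]

lemma eq_child_of_pred {u v : GPVertex} (h : GPpred u = v) :
    u = child v (u.val.2 v.val.1) := by
  subst h
  apply vext
  · simp [GPpred, child]
  · intro i
    simp only [GPpred, child]
    by_cases hi : i = u.val.1 - 1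
    · rw [if_pos hi, hi]; simp
    · rw [if_neg hi]; simp [hi]

lemma child_injBit {v : GPVertex} {b b' : Bool} (h : child v b = child v b') : b = b' := by
  have := congrArg (fun u : GPVertex => u.val.2 v.val.1) h
  simpa using this

lemma adj_child (v : GPVertex) (b : Bool) : GP.Adj v (child v b) := by
  refine ⟨fun h => ?_, Or.inl (pred_child v b).symm⟩
  · have := congrArg GPheight h
    simp at this

lemma adj_gchild (v : GPVertex) (b1 b2 : Bool) : GP.Adj v (child (child v b1) b2) := by
  refine ⟨fun h => ?_, Or.inr (Or.inr (Or.inl ?_))⟩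
  · have := congrArg GPheight h
    simp at this
    omega
  · rw [pred_child, pred_child]

lemma height_cases_of_adj {u v : GPVertex} (h : GP.Adj u v) :
    GPheight v = GPheight u - 2 ∨ GPheight v = GPheight u - 1 ∨
    GPheight v = GPheight u + 1 ∨ GPheight v = GPheight u + 2 := by
  rcases h.2 with h | h | h | h
  · right; right; left
    have := congrArg GPheight h; simp only [height_pred] at this; omega
  · right; left
    have := congrArg GPheight h; simp only [height_pred] at this; omega
  · right; right; right
    have := congrArg GPheight h; simp only [height_pred] at this; omega
  · left
    have := congrArg GPheight h; simp only [height_pred] at this; omega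

lemma eq_pred_of_adj_up_one {u v : GPVertex} (h : GP.Adj u v)
    (hh : GPheight v = GPheight u + 1) : u = GPpred v := by
  rcases h.2 with h' | h' | h' | h'
  · exact h'
  all_goals {
    exfalso
    have := congrArg GPheight h'
    simp only [height_pred] at this
    omega }

lemma eq_pred2_of_adj_up_two {u v : GPVertex} (h : GP.Adj u v)
    (hh : GPheight v = GPheight u + 2) : u = GPpred (GPpred v) := by
  rcases h.2 with h' | h' | h' | h'
  · exfalso; have := congrArg GPheight h'; simp only [height_pred] at this; omega
  · exfalso; have := congrArg GPheight h'; simp only [height_pred] at this; omega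
  · exact h'
  · exfalso; have := congrArg GPheight h'; simp only [height_pred] at this; omega

end GPaux
namespace GPaux

lemma walkSpan_zero' {V : Type*} (h : V → ℤ) (w : ℕ → V) : walkSpan h 0 w = 0 := by
  simp [walkSpan]

lemma bridge_span {V : Type*} {G : SimpleGraph V} {h : V → ℤ} {n : ℕ} {v : V}
    {w : ℕ → V} (hb : IsBridgeFrom G h n v w) :
    walkSpan h n w = h (w n) - h (w 0) := by
  unfold walkSpan
  have h0n : h (w 0) ≤ h (w n) := by
    rcases Nat.eq_zero_or_pos n with rfl | hn
    · exact le_rfl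
    · have := hb.2 n hn le_rfl; omega
  congr 1
  · apply le_antisymm
    · apply Finset.sup'_le
      intro i hi
      simp only [Finset.mem_range] at hi
      rcases Nat.eq_zero_or_pos i with rfl | hpos
      · exact h0n
      · exact (hb.2 i hpos (by omega)).2
    · exact Finset.le_sup' (fun i => h (w i)) (Finset.mem_range.2 (Nat.lt_succ_self n))
  · apply le_antisymm
    · exact Finset.inf'_le (fun i => h (w i)) (Finset.mem_range.2 (Nat.succ_pos n))
    · apply Finset.le_inf'
      intro i hi
      simp only [Finset.mem_range] at hi
      rcases Nat.eq_zero_or_pos i with rfl | hpos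
      · exact le_rfl
      · exact le_of_lt (hb.2 i hpos (by omega)).1

lemma card_zero_of_empty {α : Type*} (h : α → False) : Nat.card α = 0 := by
  have : IsEmpty α := ⟨h⟩
  exact Nat.card_of_isEmpty

lemma card_param {α : Type*} {β : Type*} (P : α → Prop) (F : β → α) (E : α → β)
    (h1 : ∀ a, P a ↔ ∃ b, a = F b) (h2 : ∀ b, E (F b) = b) :
    Nat.card {a // P a} = Nat.card β := by
  apply Nat.card_congr
  refine ⟨fun a => E a.1, fun b => ⟨F b, (h1 _).2 ⟨b, rfl⟩⟩, ?_, fun b => h2 b⟩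
  rintro ⟨a, ha⟩
  obtain ⟨b, rfl⟩ := (h1 a).1 ha
  simp [h2]

/-- explicit walks of length 1, 2, 3 -/
def W1 (a b : GPVertex) : ℕ → GPVertex := fun i => if i = 0 then a else b

def W2 (a b c : GPVertex) : ℕ → GPVertex :=
  fun i => if i = 0 then a else if i = 1 then b else c

def W3 (a b c d : GPVertex) : ℕ → GPVertex :=
  fun i => if i = 0 then a else if i = 1 then b else if i = 2 then c else d

lemma gchild_bit1 (v : GPVertex) (b1 b2 : Bool) :
    (child (child v b1) b2).val.2 v.val.1 = b1 := by
  show (if v.val.1 = (child v b1).val.1 then b2 else (child v b1).val.2 v.val.1) = b1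
  rw [if_neg (by show ¬(v.val.1 = v.val.1 + 1); omega), child_bit]

lemma gchild_bit2 (v : GPVertex) (b1 b2 : Bool) :
    (child (child v b1) b2).val.2 (v.val.1 + 1) = b2 := by
  simp [child]

lemma pred_bit {u : GPVertex} {i : ℤ} (hi : i ≠ u.val.1 - 1) :
    (GPpred u).val.2 i = u.val.2 i := by
  show (if i = u.val.1 - 1 then false else u.val.2 i) = u.val.2 i
  rw [if_neg hi]

lemma eq_gchild_of_pred2 {u v : GPVertex} (h : GPpred (GPpred u) = v) :
    u = child (child v (u.val.2 v.val.1)) (u.val.2 (v.val.1 + 1)) := by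
  have hv1 : v.val.1 = u.val.1 - 2 := by
    have := congrArg (fun x : GPVertex => x.val.1) h
    simp only [GPpred] at this
    omega
  have h1 : GPpred u = child v ((GPpred u).val.2 v.val.1) := eq_child_of_pred h
  have hb : (GPpred u).val.2 v.val.1 = u.val.2 v.val.1 := pred_bit (by omega)
  have hp1 : (GPpred u).val.1 = u.val.1 - 1 := rfl
  have h2 : u = child (GPpred u) (u.val.2 (GPpred u).val.1) := eq_child_of_pred rfl
  rw [hb] at h1
  rw [hp1] at h2
  rw [h1] at h2
  have : (child v (u.val.2 v.val.1)).val.1 = v.val.1 + 1 := rfl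
  rw [show u.val.1 - 1 = v.val.1 + 1 by omega] at h2
  exact h2

lemma height_w0 {n : ℕ} {o : GPVertex} {w : ℕ → GPVertex}
    (hb : IsBridgeFrom GP GPheight n o w) : w 0 = o := hb.1.1.1

lemma child_ne_self (v : GPVertex) (b : Bool) : child v b ≠ v := by
  intro h
  have := congrArg GPheight h
  simp at this

end GPaux
namespace GPaux

lemma bridgeW1 (o t : GPVertex) (hadj : GP.Adj o t) (hlt : GPheight o < GPheight t) :
    IsBridgeFrom GP GPheight 1 o (W1 o t) := by
  refine ⟨⟨⟨rfl, ?_, ?_⟩, ?_⟩, ?_⟩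
  · intro i hi
    interval_cases i
    simpa [W1] using hadj
  · intro i hi
    have h0 : i ≠ 0 := by omega
    simp [W1, h0]
  · intro i hi j hj hij
    simp only [Set.mem_Iic] at hi hj
    interval_cases i <;> interval_cases j <;> simp_all [W1]
  · intro i h1 h2
    have : i = 1 := by omega
    subst this
    simp only [W1]
    norm_num
    exact hlt

lemma bridgeW2 (o t1 t2 : GPVertex) (ha1 : GP.Adj o t1) (ha2 : GP.Adj t1 t2)
    (h1 : GPheight t1 = GPheight o + 1) (h2 : GPheight t2 = GPheight o + 2) :
    IsBridgeFrom GP GPheight 2 o (W2 o t1 t2) := by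
  have ne02 : o ≠ t2 := by
    intro h; rw [h] at h2; omega
  refine ⟨⟨⟨rfl, ?_, ?_⟩, ?_⟩, ?_⟩
  · intro i hi
    interval_cases i
    · simpa [W2] using ha1
    · simpa [W2] using ha2
  · intro i hi
    have h0 : i ≠ 0 := by omega
    have h1' : i ≠ 1 := by omega
    simp [W2, h0, h1']
  · intro i hi j hj hij
    simp only [Set.mem_Iic] at hi hj
    interval_cases i <;> interval_cases j <;> simp_all [W2]
  · intro i hi1 hi2
    interval_cases i <;> simp only [W2] <;> norm_num <;> omega

lemma bridgeW3 (o t1 t2 t3 : GPVertex) (ha1 : GP.Adj o t1) (ha2 : GP.Adj t1 t2)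
    (ha3 : GP.Adj t2 t3) (hne13 : t1 ≠ t3)
    (h1 : GPheight t1 = GPheight o + 2) (h2 : GPheight t2 = GPheight o + 1)
    (h3 : GPheight t3 = GPheight o + 2) :
    IsBridgeFrom GP GPheight 3 o (W3 o t1 t2 t3) := by
  have ne01 : o ≠ t1 := ha1.ne
  have ne02 : o ≠ t2 := by intro h; rw [h] at h2; omega
  have ne03 : o ≠ t3 := by intro h; rw [h] at h3; omega
  refine ⟨⟨⟨rfl, ?_, ?_⟩, ?_⟩, ?_⟩
  · intro i hi
    interval_cases i
    · simpa [W3] using ha1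
    · simpa [W3] using ha2
    · simpa [W3] using ha3
  · intro i hi
    have h0 : i ≠ 0 := by omega
    have h1' : i ≠ 1 := by omega
    have h2' : i ≠ 2 := by omega
    simp [W3, h0, h1', h2']
  · intro i hi j hj hij
    simp only [Set.mem_Iic] at hi hj
    interval_cases i <;> interval_cases j <;> simp_all [W3]
  · intro i hi1 hi2
    interval_cases i <;> simp only [W3] <;> norm_num <;> omega

end GPaux
namespace GPaux

lemma W1_0 (a b : GPVertex) : W1 a b 0 = a := rfl
lemma W1_pos (a b : GPVertex) {i : ℕ} (hi : i ≠ 0) : W1 a b i = b := if_neg hi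
lemma W1_1 (a b : GPVertex) : W1 a b 1 = b := W1_pos a b one_ne_zero

lemma W2_0 (a b c : GPVertex) : W2 a b c 0 = a := rfl
lemma W2_1 (a b c : GPVertex) : W2 a b c 1 = b := by
  unfold W2; rw [if_neg (by omega), if_pos rfl]
lemma W2_ge (a b c : GPVertex) {i : ℕ} (hi : 2 ≤ i) : W2 a b c i = c := by
  unfold W2; rw [if_neg (by omega), if_neg (by omega)]

lemma W3_0 (a b c d : GPVertex) : W3 a b c d 0 = a := rfl
lemma W3_1 (a b c d : GPVertex) : W3 a b c d 1 = b := by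
  unfold W3; rw [if_neg (by omega), if_pos rfl]
lemma W3_2 (a b c d : GPVertex) : W3 a b c d 2 = c := by
  unfold W3; rw [if_neg (by omega), if_neg (by omega), if_pos rfl]
lemma W3_ge (a b c d : GPVertex) {i : ℕ} (hi : 3 ≤ i) : W3 a b c d i = d := by
  unfold W3; rw [if_neg (by omega), if_neg (by omega), if_neg (by omega)]

lemma cnt00 (o : GPVertex) : bridgeSpanCount GP GPheight 0 o 0 = 1 := by
  unfold bridgeSpanCount
  rw [card_param _ (fun _ : Unit => (fun _ : ℕ => o)) (fun _ => Unit.unit)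
    ?_ (fun _ => rfl)]
  · simp
  intro w
  constructor
  · rintro ⟨hb, _⟩
    refine ⟨Unit.unit, funext fun i => ?_⟩
    beta_reduce
    rw [hb.1.1.2.2 i (Nat.zero_le i), hb.1.1.1]
  · rintro ⟨_, rfl⟩
    refine ⟨⟨⟨⟨rfl, ?_, fun i _ => rfl⟩, ?_⟩, ?_⟩, walkSpan_zero' _ _⟩
    · intro i hi; omega
    · intro i hi j hj _
      simp only [Set.mem_Iic] at hi hj
      omega
    · intro i hi1 hi2; omega

lemma cnt0pos (o : GPVertex) {n : ℕ} (hn : 1 ≤ n) :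
    bridgeSpanCount GP GPheight n o 0 = 0 := by
  unfold bridgeSpanCount
  apply card_zero_of_empty
  rintro ⟨w, hb, hs⟩
  rw [bridge_span hb] at hs
  have := hb.2 n hn le_rfl
  omega

lemma cntN0 (o : GPVertex) {a : ℤ} (ha : a ≠ 0) :
    bridgeSpanCount GP GPheight 0 o a = 0 := by
  unfold bridgeSpanCount
  apply card_zero_of_empty
  rintro ⟨w, _, hs⟩
  rw [walkSpan_zero'] at hs
  exact ha hs.symm

lemma cnt1_1 (o : GPVertex) : bridgeSpanCount GP GPheight 1 o 1 = 2 := by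
  unfold bridgeSpanCount
  rw [card_param _ (fun b : Bool => W1 o (child o b)) (fun w => (w 1).val.2 o.val.1)
    ?_ (fun b => by beta_reduce; rw [W1_1, child_bit])]
  · simp [Nat.card_eq_fintype_card]
  intro w
  constructor
  · rintro ⟨hb, hs⟩
    have h0 : w 0 = o := hb.1.1.1
    rw [bridge_span hb] at hs
    have h1 : GPheight (w 1) = GPheight (w 0) + 1 := by omega
    have hadj : GP.Adj (w 0) (w 1) := hb.1.1.2.1 0 (by omega)
    have hp := eq_pred_of_adj_up_one hadj h1
    have hc1 : w 1 = child o ((w 1).val.2 o.val.1) := by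
      rw [← h0]
      exact eq_child_of_pred hp.symm
    refine ⟨(w 1).val.2 o.val.1, funext fun i => ?_⟩
    beta_reduce
    rcases Nat.eq_zero_or_pos i with rfl | hi
    · rw [W1_0]; exact h0
    · rw [hb.1.1.2.2 i hi, W1_pos _ _ (by omega)]
      exact hc1
  · rintro ⟨b, rfl⟩
    have hb := bridgeW1 o (child o b) (adj_child o b)
      (by rw [height_child]; omega)
    refine ⟨hb, ?_⟩
    rw [bridge_span hb, W1_1, W1_0, height_child]
    ring

lemma cnt1big (o : GPVertex) {n : ℕ} (hn : 2 ≤ n) :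
    bridgeSpanCount GP GPheight n o 1 = 0 := by
  unfold bridgeSpanCount
  apply card_zero_of_empty
  rintro ⟨w, hb, hs⟩
  rw [bridge_span hb] at hs
  have b1 := hb.2 1 (by omega) (by omega)
  have b2 := hb.2 2 (by omega) hn
  have hadj : GP.Adj (w 1) (w 2) := hb.1.1.2.1 1 (by omega)
  rcases height_cases_of_adj hadj with h | h | h | h <;> omega

lemma cnt2_1 (o : GPVertex) : bridgeSpanCount GP GPheight 1 o 2 = 4 := by
  unfold bridgeSpanCount
  rw [card_param _ (fun b : Bool × Bool => W1 o (child (child o b.1) b.2))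
    (fun w => ((w 1).val.2 o.val.1, (w 1).val.2 (o.val.1 + 1)))
    ?_ (fun b => by beta_reduce; rw [W1_1, gchild_bit1, gchild_bit2])]
  · simp [Nat.card_eq_fintype_card]
  intro w
  constructor
  · rintro ⟨hb, hs⟩
    have h0 : w 0 = o := hb.1.1.1
    rw [bridge_span hb] at hs
    have h1 : GPheight (w 1) = GPheight (w 0) + 2 := by omega
    have hadj : GP.Adj (w 0) (w 1) := hb.1.1.2.1 0 (by omega)
    have hp := eq_pred2_of_adj_up_two hadj h1
    have hc1 : w 1 = child (child o ((w 1).val.2 o.val.1)) ((w 1).val.2 (o.val.1 + 1)) := by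
      rw [← h0]
      exact eq_gchild_of_pred2 hp.symm
    refine ⟨((w 1).val.2 o.val.1, (w 1).val.2 (o.val.1 + 1)), funext fun i => ?_⟩
    beta_reduce
    rcases Nat.eq_zero_or_pos i with rfl | hi
    · rw [W1_0]; exact h0
    · rw [hb.1.1.2.2 i hi, W1_pos _ _ (by omega)]
      exact hc1
  · rintro ⟨⟨b1, b2⟩, rfl⟩
    have hb := bridgeW1 o (child (child o b1) b2) (adj_gchild o b1 b2)
      (by rw [height_child, height_child]; omega)
    refine ⟨hb, ?_⟩
    rw [bridge_span hb, W1_1, W1_0, height_child, height_child]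
    ring

lemma cnt2_2 (o : GPVertex) : bridgeSpanCount GP GPheight 2 o 2 = 4 := by
  unfold bridgeSpanCount
  rw [card_param _
    (fun b : Bool × Bool => W2 o (child o b.1) (child (child o b.1) b.2))
    (fun w => ((w 1).val.2 o.val.1, (w 2).val.2 (o.val.1 + 1)))
    ?_ (fun b => by beta_reduce; rw [W2_1, W2_ge _ _ _ le_rfl, child_bit, gchild_bit2])]
  · simp [Nat.card_eq_fintype_card]
  intro w
  constructor
  · rintro ⟨hb, hs⟩
    have h0 : w 0 = o := hb.1.1.1
    rw [bridge_span hb] at hs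
    have hb1 := hb.2 1 (by omega) (by omega)
    have hadj01 : GP.Adj (w 0) (w 1) := hb.1.1.2.1 0 (by omega)
    have hadj12 : GP.Adj (w 1) (w 2) := hb.1.1.2.1 1 (by omega)
    have h1 : GPheight (w 1) = GPheight (w 0) + 1 := by
      rcases height_cases_of_adj hadj01 with h | h | h | h <;>
        rcases height_cases_of_adj hadj12 with g | g | g | g <;> omega
    have hp1 := eq_pred_of_adj_up_one hadj01 h1
    have hc1 : w 1 = child o ((w 1).val.2 o.val.1) := by
      rw [← h0]
      exact eq_child_of_pred hp1.symm
    have h2 : GPheight (w 2) = GPheight (w 1) + 1 := by omega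
    have hp2 := eq_pred_of_adj_up_one hadj12 h2
    have hc2 : w 2 = child (w 1) ((w 2).val.2 (w 1).val.1) := eq_child_of_pred hp2.symm
    have hw11 : (w 1).val.1 = o.val.1 + 1 := by
      rw [h0] at h1
      exact h1
    rw [hw11] at hc2
    rw [hc1] at hc2
    refine ⟨((w 1).val.2 o.val.1, (w 2).val.2 (o.val.1 + 1)), funext fun i => ?_⟩
    beta_reduce
    by_cases hi0 : i = 0
    · subst hi0; rw [W2_0]; exact h0
    by_cases hi1 : i = 1
    · subst hi1; rw [W2_1]; exact hc1
    have h2i : 2 ≤ i := by omega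
    rw [hb.1.1.2.2 i h2i, W2_ge _ _ _ h2i]
    exact hc2
  · rintro ⟨⟨b1, b2⟩, rfl⟩
    have hb := bridgeW2 o (child o b1) (child (child o b1) b2)
      (adj_child o b1) (adj_child (child o b1) b2)
      (height_child o b1)
      (by rw [height_child, height_child]; ring)
    refine ⟨hb, ?_⟩
    rw [bridge_span hb, W2_ge _ _ _ le_rfl, W2_0, height_child, height_child]
    ring

lemma cnt2_3 (o : GPVertex) : bridgeSpanCount GP GPheight 3 o 2 = 4 := by
  unfold bridgeSpanCount
  rw [card_param _
    (fun b : Bool × Bool =>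
      W3 o (child (child o b.1) b.2) (child o b.1) (child (child o b.1) (!b.2)))
    (fun w => ((w 1).val.2 o.val.1, (w 1).val.2 (o.val.1 + 1)))
    ?_ (fun b => by beta_reduce; rw [W3_1, gchild_bit1, gchild_bit2])]
  · simp [Nat.card_eq_fintype_card]
  intro w
  constructor
  · rintro ⟨hb, hs⟩
    have h0 : w 0 = o := hb.1.1.1
    rw [bridge_span hb] at hs
    have hb1 := hb.2 1 (by omega) (by omega)
    have hb2 := hb.2 2 (by omega) (by omega)
    have hadj01 : GP.Adj (w 0) (w 1) := hb.1.1.2.1 0 (by omega)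
    have hadj12 : GP.Adj (w 1) (w 2) := hb.1.1.2.1 1 (by omega)
    have hadj23 : GP.Adj (w 2) (w 3) := hb.1.1.2.1 2 (by omega)
    have hkey : GPheight (w 1) = GPheight (w 0) + 2 ∧
        GPheight (w 2) = GPheight (w 0) + 1 := by
      rcases height_cases_of_adj hadj01 with h | h | h | h <;>
        rcases height_cases_of_adj hadj12 with g | g | g | g <;>
          rcases height_cases_of_adj hadj23 with f | f | f | f <;> omega
    obtain ⟨h1, h2⟩ := hkey
    have hp1 := eq_pred2_of_adj_up_two hadj01 h1
    have hc1 : w 1 = child (child o ((w 1).val.2 o.val.1)) ((w 1).val.2 (o.val.1 + 1)) := by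
      rw [← h0]
      exact eq_gchild_of_pred2 hp1.symm
    have hp2 : w 2 = GPpred (w 1) := eq_pred_of_adj_up_one hadj12.symm (by omega)
    have hc2 : w 2 = child o ((w 1).val.2 o.val.1) := by
      rw [hp2, hc1, pred_child, gchild_bit1]
    have h3 : GPheight (w 3) = GPheight (w 2) + 1 := by omega
    have hp3 := eq_pred_of_adj_up_one hadj23 h3
    have hc3 : w 3 = child (w 2) ((w 3).val.2 (w 2).val.1) := eq_child_of_pred hp3.symm
    have hw21 : (w 2).val.1 = o.val.1 + 1 := by
      rw [h0] at h2
      exact h2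
    rw [hw21] at hc3
    rw [hc2] at hc3
    have hne13 : w 1 ≠ w 3 := by
      intro hh
      have := hb.1.2 (Set.mem_Iic.mpr (by omega : (1:ℕ) ≤ 3))
        (Set.mem_Iic.mpr (by omega : (3:ℕ) ≤ 3)) hh
      omega
    have hb3 : (w 3).val.2 (o.val.1 + 1) = !((w 1).val.2 (o.val.1 + 1)) := by
      by_cases hbb : (w 3).val.2 (o.val.1 + 1) = (w 1).val.2 (o.val.1 + 1)
      · exfalso
        apply hne13
        rw [hc1, hc3, hbb]
      · cases hx : (w 1).val.2 (o.val.1 + 1) <;>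
          cases hy : (w 3).val.2 (o.val.1 + 1) <;> rw [hx, hy] at hbb <;>
          first | rfl | exact absurd rfl hbb
    rw [hb3] at hc3
    refine ⟨((w 1).val.2 o.val.1, (w 1).val.2 (o.val.1 + 1)), funext fun i => ?_⟩
    beta_reduce
    by_cases hi0 : i = 0
    · subst hi0; rw [W3_0]; exact h0
    by_cases hi1 : i = 1
    · subst hi1; rw [W3_1]; exact hc1
    by_cases hi2 : i = 2
    · subst hi2; rw [W3_2]; exact hc2
    have h3i : 3 ≤ i := by omega
    rw [hb.1.1.2.2 i h3i, W3_ge _ _ _ _ h3i]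
    exact hc3
  · rintro ⟨⟨b1, b2⟩, rfl⟩
    have hne : child (child o b1) b2 ≠ child (child o b1) (!b2) := by
      intro h
      have := child_injBit h
      simp at this
    have hb := bridgeW3 o (child (child o b1) b2) (child o b1) (child (child o b1) (!b2))
      (adj_gchild o b1 b2) (adj_child (child o b1) b2).symm
      (adj_child (child o b1) (!b2)) hne
      (by rw [height_child, height_child]; ring)
      (height_child o b1)
      (by rw [height_child, height_child]; ring)
    refine ⟨hb, ?_⟩
    rw [bridge_span hb, W3_ge _ _ _ _ le_rfl, W3_0, height_child, height_child]
    ring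

lemma cnt2big (o : GPVertex) {n : ℕ} (hn : 4 ≤ n) :
    bridgeSpanCount GP GPheight n o 2 = 0 := by
  unfold bridgeSpanCount
  apply card_zero_of_empty
  rintro ⟨w, hb, hs⟩
  rw [bridge_span hb] at hs
  have q1 := hb.2 1 (by omega) (by omega)
  have q2 := hb.2 2 (by omega) (by omega)
  have q3 := hb.2 3 (by omega) (by omega)
  have q4 := hb.2 4 (by omega) (by omega)
  have hadj01 : GP.Adj (w 0) (w 1) := hb.1.1.2.1 0 (by omega)
  have hadj12 : GP.Adj (w 1) (w 2) := hb.1.1.2.1 1 (by omega)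
  have hadj23 : GP.Adj (w 2) (w 3) := hb.1.1.2.1 2 (by omega)
  have hadj34 : GP.Adj (w 3) (w 4) := hb.1.1.2.1 3 (by omega)
  have hkey : (GPheight (w 2) = GPheight (w 1) + 1 ∧ GPheight (w 2) = GPheight (w 3) + 1) ∨
      (GPheight (w 3) = GPheight (w 2) + 1 ∧ GPheight (w 3) = GPheight (w 4) + 1) := by
    rcases height_cases_of_adj hadj01 with h | h | h | h <;>
      rcases height_cases_of_adj hadj12 with g | g | g | g <;>
        rcases height_cases_of_adj hadj23 with f | f | f | f <;>
          rcases height_cases_of_adj hadj34 with e | e | e | e <;> omega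
  rcases hkey with ⟨k1, k2⟩ | ⟨k1, k2⟩
  · have e1 : w 1 = GPpred (w 2) := eq_pred_of_adj_up_one hadj12 k1
    have e3 : w 3 = GPpred (w 2) := eq_pred_of_adj_up_one hadj23.symm k2
    have := hb.1.2 (Set.mem_Iic.mpr (by omega : 1 ≤ n))
      (Set.mem_Iic.mpr (by omega : 3 ≤ n)) (e1.trans e3.symm)
    omega
  · have e2 : w 2 = GPpred (w 3) := eq_pred_of_adj_up_one hadj23 k1
    have e4 : w 4 = GPpred (w 3) := eq_pred_of_adj_up_one hadj34.symm k2
    have := hb.1.2 (Set.mem_Iic.mpr (by omega : 2 ≤ n))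
      (Set.mem_Iic.mpr (by omega : 4 ≤ n)) (e2.trans e4.symm)
    omega

end GPaux
/-- In `GP`: `ℬ₀(x) = 1`, `ℬ₁(x) = 2x`, `ℬ₂(x) = 4x + 4x² + 4x³`,
coefficientwise. -/
theorem statement_16 (o : GPVertex) :
    (∀ n : ℕ, bridgeSpanCount GP GPheight n o 0 = if n = 0 then 1 else 0) ∧
    (∀ n : ℕ, bridgeSpanCount GP GPheight n o 1 = if n = 1 then 2 else 0) ∧
    (∀ n : ℕ, bridgeSpanCount GP GPheight n o 2 =
      if n = 1 ∨ n = 2 ∨ n = 3 then 4 else 0) := by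
  refine ⟨fun n => ?_, fun n => ?_, fun n => ?_⟩
  · rcases Nat.eq_zero_or_pos n with rfl | hn
    · rw [if_pos rfl]
      exact GPaux.cnt00 o
    · rw [if_neg (by omega)]
      exact GPaux.cnt0pos o hn
  · by_cases h : n = 1
    · subst h
      rw [if_pos rfl]
      exact GPaux.cnt1_1 o
    · rw [if_neg h]
      rcases Nat.eq_zero_or_pos n with rfl | hn
      · exact GPaux.cntN0 o one_ne_zero
      · exact GPaux.cnt1big o (by omega)
  · by_cases h1 : n = 1
    · subst h1
      rw [if_pos (Or.inl rfl)]
      exact GPaux.cnt2_1 o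
    by_cases h2 : n = 2
    · subst h2
      rw [if_pos (Or.inr (Or.inl rfl))]
      exact GPaux.cnt2_2 o
    by_cases h3 : n = 3
    · subst h3
      rw [if_pos (Or.inr (Or.inr rfl))]
      exact GPaux.cnt2_3 o
    rw [if_neg (by tauto)]
    rcases Nat.eq_zero_or_pos n with rfl | hn
    · exact GPaux.cntN0 o two_ne_zero
    · exact GPaux.cnt2big o (by omega)
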